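/- If A is in ARI_{al*al} (alternal, swap alternal up to a constant mould, even in depth 1), then A is invariant under both neg and push. -/

import Mathlib

open List

variable {K : Type*} [Field K] [CharZero K]

/-- The multiset (as a list, with multiplicity) of shuffles of two words. -/
def shuffles {α : Type*} : List α → List α → List (List α)
  | [], v => [v]
  | u, [] => [u]
  | x :: u, y :: v =>
      ((shuffles u (y :: v)).map (x :: ·)) ++ ((shuffles (x :: u) v).map (y :: ·))
  termination_by u v => u.length + v.length

/-- A mould (at the level of evaluations) is alternal if all its shuffle sums over
pairs of nonempty words vanish. -/
def Alternal (A : List K → K) : Prop :=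
  ∀ u v : List K, u ≠ [] → v ≠ [] → ((shuffles u v).map A).sum = 0

/-- mould multiplication `mu`. -/
def mu (A B : List K → K) : List K → K :=
  fun w => ∑ k ∈ Finset.range (w.length + 1), A (w.take k) * B (w.drop k)

/-- `lu(A,B) = mu(A,B) - mu(B,A)`. -/
def lu (A B : List K → K) : List K → K :=
  fun w => mu A B w - mu B A w

/-- All decompositions of a word into two consecutive subwords. -/
def splits2 {α : Type*} (w : List α) : List (List α × List α) :=
  (List.range (w.length + 1)).map fun k => (w.take k, w.drop k)

/-- All decompositions of a word into three consecutive subwords. -/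
def splits3 {α : Type*} (w : List α) : List (List α × List α × List α) :=
  (splits2 w).flatMap fun p => (splits2 p.2).map fun q => (p.1, q.1, q.2)

/-- Add `s` to the first letter of a word. -/
def addFirst (s : K) : List K → List K
  | [] => []
  | x :: xs => (x + s) :: xs

/-- Add `s` to the last letter of a word. -/
def addLast (s : K) : List K → List K
  | [] => []
  | [x] => [x + s]
  | x :: xs => x :: addLast s xs

/-- `amit` for u-moulds: `(amit(B)·A)(w) = Σ_{w=abc, b,c≠∅} A(a⌈c) B(b)`. -/
def amitU (B A : List K → K) : List K → K := fun w =>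
  ((splits3 w).map fun p =>
    match p with
    | (_, [], _) => 0
    | (_, _, []) => 0
    | (a, b, c) => A (a ++ addFirst b.sum c) * B b).sum

/-- `anit` for u-moulds: `(anit(B)·A)(w) = Σ_{w=abc, a,b≠∅} A(a⌉c) B(b)`. -/
def anitU (B A : List K → K) : List K → K := fun w =>
  ((splits3 w).map fun p =>
    match p with
    | ([], _, _) => 0
    | (_, [], _) => 0
    | (a, b, c) => A (addLast b.sum a ++ c) * B b).sum

/-- `arit(B)·A = amit(B)·A - anit(B)·A` on u-moulds. -/
def aritU (B A : List K → K) : List K → K :=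
  fun w => amitU B A w - anitU B A w

/-- the ari bracket on u-moulds. -/
def ariU (A B : List K → K) : List K → K :=
  fun w => aritU B A w + lu A B w - aritU A B w

/-- `amit` for v-moulds. -/
def amitV (B A : List K → K) : List K → K := fun w =>
  ((splits3 w).map fun p =>
    match p with
    | (_, [], _) => 0
    | (_, _, []) => 0
    | (a, b, c0 :: c') => A (a ++ c0 :: c') * B (b.map (fun x => x - c0))).sum

/-- `anit` for v-moulds. -/
def anitV (B A : List K → K) : List K → K := fun w =>
  ((splits3 w).map fun p =>
    match p with
    | ([], _, _) => 0
    | (_, [], _) => 0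
    | (a, b, c) => A (a ++ c) * B (b.map (fun x => x - a.getLastD 0))).sum

/-- `arit(B)·A = amit(B)·A - anit(B)·A` on v-moulds. -/
def aritV (B A : List K → K) : List K → K :=
  fun w => amitV B A w - anitV B A w

/-- the ari bracket on v-moulds. -/
def ariV (A B : List K → K) : List K → K :=
  fun w => aritV B A w + lu A B w - aritV A B w

/-- `neg(A)(u_1,...,u_r) = A(-u_1,...,-u_r)`. -/
def negM (A : List K → K) : List K → K := fun w => A (w.map fun x => -x)

/-- `push(A)(u_1,...,u_r) = A(-u_1-⋯-u_r, u_1, ..., u_{r-1})`. -/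
def pushM (A : List K → K) : List K → K := fun w =>
  match w with
  | [] => A []
  | _ :: _ => A ((-w.sum) :: w.dropLast)

/-- `mantar(A)(u_1,...,u_r) = (-1)^{r-1} A(u_r,...,u_1)`. -/
def mantarM (A : List K → K) : List K → K :=
  fun w => (-1 : K) ^ (w.length + 1) * A w.reverse

/-- argument list for swap from u-moulds to v-moulds:
`(v_1,...,v_r) ↦ (v_r, v_{r-1}-v_r, ..., v_1-v_2)`. -/
def swapUargs (w : List K) : List K :=
  List.zipWith (· - ·) w.reverse (0 :: w.reverse)

/-- argument list for swap from v-moulds to u-moulds: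
`(u_1,...,u_r) ↦ (u_1+⋯+u_r, u_1+⋯+u_{r-1}, ..., u_1)`. -/
def swapVargs (w : List K) : List K :=
  (List.range w.length).map fun i => (w.take (w.length - i)).sum

/-- swap, sending a u-mould to a v-mould. -/
def swapUV (A : List K → K) : List K → K := fun w => A (swapUargs w)

/-- swap, sending a v-mould to a u-mould. -/
def swapVU (A : List K → K) : List K → K := fun w => A (swapVargs w)

/-- A constant-valued mould: its value depends only on the depth. -/
def IsConstantMould (C : List K → K) : Prop :=
  ∀ w w' : List K, w.length = w'.length → C w = C w'



/-! ### Auxiliary lemmas -/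

section Aux

set_option linter.unusedSectionVars false

lemma shuffles_nil_left' {α : Type*} (v : List α) : shuffles [] v = [v] := by simp [shuffles]

lemma shuffles_nil_right' {α : Type*} (u : List α) : shuffles u [] = [u] := by
  cases u <;> simp [shuffles]

lemma shuffles_cons_cons' {α : Type*} (x y : α) (u v : List α) :
    shuffles (x :: u) (y :: v) =
      ((shuffles u (y :: v)).map (x :: ·)) ++ ((shuffles (x :: u) v).map (y :: ·)) := by
  simp [shuffles]

/-- mantar: an alternal mould satisfies `A(rev w) = (-1)^(r+1) A(w)`. -/
lemma alternal_reverse (A : List K → K) (hA : Alternal A) (w : List K) (hw : w ≠ []) :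
    A w.reverse = (-1 : K) ^ (w.length + 1) * A w := by
  obtain ⟨m, hm⟩ : ∃ m, w.length = m + 1 := by
    cases h : w.length with
    | zero => exact absurd (List.length_eq_zero_iff.mp h) hw
    | succ n => exact ⟨n, rfl⟩
  set D : ℕ → K := fun j =>
    ((shuffles ((w.take j).reverse) (w.drop (j+1))).map (fun s => A (w.getD j 0 :: s))).sum
    with hD
  have hc3 : ∀ j, j + 1 < w.length →
      ((shuffles ((w.take (j+1)).reverse) (w.drop (j+1))).map A).sum = D j + D (j+1) := by
    intro j hj
    have hjlt : j < w.length := by omega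
    have htk : w.take (j+1) = w.take j ++ [w.getD j 0] := by
      rw [List.take_succ, List.getElem?_eq_getElem hjlt, List.getD_eq_getElem _ _ hjlt]
      rfl
    have hdr : w.drop (j+1) = w.getD (j+1) 0 :: w.drop (j+2) := by
      rw [List.getD_eq_getElem _ _ hj]
      exact List.drop_eq_getElem_cons hj
    have e1 : D j = ((shuffles ((w.take j).reverse) (w.getD (j+1) 0 :: w.drop (j+2))).map
        (fun s => A (w.getD j 0 :: s))).sum := by
      simp only [hD]; rw [← hdr]
    have e2 : D (j+1) = ((shuffles (w.getD j 0 :: (w.take j).reverse) (w.drop (j+2))).map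
        (fun s => A (w.getD (j+1) 0 :: s))).sum := by
      simp only [hD]
      have : (w.take (j+1)).reverse = w.getD j 0 :: (w.take j).reverse := by
        rw [htk]; simp
      rw [this]
    rw [e1, e2]
    have e3 : (w.take (j+1)).reverse = w.getD j 0 :: (w.take j).reverse := by
      rw [htk]; simp
    rw [e3, hdr, shuffles_cons_cons', List.map_append, List.sum_append,
      List.map_map, List.map_map]
    rfl
  have hkey : ∀ j, j ≤ m → D j = (-1 : K) ^ j * D 0 := by
    intro j hj
    induction j with
    | zero => simp
    | succ i ih =>
      have hi : i ≤ m := by omega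
      have hlt : i + 1 < w.length := by omega
      have hz : ((shuffles ((w.take (i+1)).reverse) (w.drop (i+1))).map A).sum = 0 := by
        apply hA
        · apply List.ne_nil_of_length_pos
          rw [List.length_reverse, List.length_take]; omega
        · apply List.ne_nil_of_length_pos
          rw [List.length_drop]; omega
      rw [hc3 i hlt] at hz
      have h4 : D (i+1) = -D i := by linear_combination hz
      rw [h4, ih hi]
      ring
  have hD0 : D 0 = A w := by
    obtain ⟨x, t, rfl⟩ := List.exists_cons_of_ne_nil hw
    simp [hD, shuffles_nil_left']
  have hDm : D m = A w.reverse := by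
    have hdrop : w.drop (m+1) = [] := by
      rw [← hm]; exact List.drop_length
    have hmlt : m < w.length := by omega
    have htk : w.take (m+1) = w.take m ++ [w.getD m 0] := by
      rw [List.take_succ, List.getElem?_eq_getElem hmlt, List.getD_eq_getElem _ _ hmlt]
      rfl
    have h5 : w.getD m 0 :: (w.take m).reverse = (w.take (m+1)).reverse := by
      rw [htk]; simp
    simp only [hD]
    simp only [hdrop, shuffles_nil_right', List.map_cons, List.map_nil, List.sum_cons,
      List.sum_nil, add_zero, h5]
    rw [← hm, List.take_length]
  have hfin := hkey m le_rfl
  rw [hDm, hD0] at hfin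
  rw [hfin, hm]
  ring

/-- partial sums from the left -/
def psl : List K → List K
  | [] => []
  | x :: t => x :: (psl t).map (x + ·)

/-- suffix sums -/
def dsl : List K → List K
  | [] => []
  | x :: t => (x + t.sum) :: dsl t

/-- consecutive differences with initial value c -/
def zds (c : K) : List K → List K
  | [] => []
  | a :: t => (a - c) :: zds a t

lemma zipWith_sub_eq_zds (c : K) (l : List K) :
    List.zipWith (· - ·) l (c :: l) = zds c l := by
  induction l generalizing c with
  | nil => rfl
  | cons a t ih => simp [zds, ih]

lemma swapUargs_reverse (l : List K) : swapUargs l.reverse = zds 0 l := by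
  rw [swapUargs, List.reverse_reverse, zipWith_sub_eq_zds]

lemma swapUargs_eq (w : List K) : swapUargs w = zds 0 w.reverse := by
  rw [swapUargs, zipWith_sub_eq_zds]

lemma swapVargs_cons (x : K) (w : List K) :
    swapVargs (x :: w) = (swapVargs w).map (x + ·) ++ [x] := by
  simp only [swapVargs, List.length_cons]
  rw [List.range_succ, List.map_append, List.map_map]
  congr 1
  · apply List.map_congr_left
    intro i hi
    rw [List.mem_range] at hi
    have h1 : w.length + 1 - i = (w.length - i) + 1 := by omega
    simp only [Function.comp_apply, h1, List.take_succ_cons, List.sum_cons]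
  · simp

lemma swapVargs_eq_psl_reverse (w : List K) : swapVargs w = (psl w).reverse := by
  induction w with
  | nil => rfl
  | cons x t ih =>
    rw [swapVargs_cons, ih, psl]
    simp [List.map_reverse]

lemma zds_map_add (x c : K) (l : List K) : zds (x + c) (l.map (x + ·)) = zds c l := by
  induction l generalizing c with
  | nil => rfl
  | cons a t ih =>
    simp only [List.map_cons, zds, List.cons.injEq]
    exact ⟨by ring, ih a⟩

lemma zds_psl (w : List K) : zds 0 (psl w) = w := by
  induction w with
  | nil => rfl
  | cons x t ih =>
    rw [psl, zds, sub_zero]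
    congr 1
    have := zds_map_add x 0 (psl t)
    rw [add_zero] at this
    rw [this, ih]

lemma swapUargs_swapVargs (w : List K) : swapUargs (swapVargs w) = w := by
  rw [swapVargs_eq_psl_reverse, swapUargs_reverse, zds_psl]

lemma psl_concat (l : List K) (x : K) : psl (l ++ [x]) = psl l ++ [x + l.sum] := by
  induction l with
  | nil => simp [psl]
  | cons y t ih =>
    show psl (y :: (t ++ [x])) = _
    rw [psl, ih, List.map_append]
    simp only [List.map_cons, List.map_nil, psl, List.sum_cons, List.cons_append]
    have h9 : y + (x + t.sum) = x + (y + t.sum) := by ring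
    rw [h9]

lemma psl_reverse (w : List K) : psl w.reverse = (dsl w).reverse := by
  induction w with
  | nil => rfl
  | cons x t ih =>
    rw [List.reverse_cons, psl_concat, ih, List.sum_reverse, dsl, List.reverse_cons]

lemma swapVargs_reverse_eq_dsl (w : List K) : swapVargs w.reverse = dsl w := by
  rw [swapVargs_eq_psl_reverse, psl_reverse, List.reverse_reverse]

/-- arguments of neg ∘ push -/
def npArgs (w : List K) : List K := w.sum :: (w.dropLast).map (fun x => -x)

lemma zds_dsl_tail (t : List K) (x : K) (ht : t ≠ []) :
    zds (x + t.sum) (dsl t) = (-x) :: (t.dropLast).map (fun a => -a) := by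
  induction t generalizing x with
  | nil => exact absurd rfl ht
  | cons y t' ih =>
    cases t' with
    | nil =>
      simp only [dsl, zds, List.sum_cons, List.sum_nil, List.dropLast_singleton, List.map_nil]
      have h9 : y + 0 - (x + (y + 0)) = -x := by ring
      rw [h9]
    | cons z t'' =>
      rw [dsl, zds]
      rw [ih y (by simp)]
      have h8 : (y + (z :: t'').sum) - (x + (y :: z :: t'').sum) = -x := by
        simp only [List.sum_cons]; ring
      rw [h8]
      simp

lemma zds_dsl (w : List K) (hw : w ≠ []) : zds 0 (dsl w) = npArgs w := by
  obtain ⟨x, t, rfl⟩ := List.exists_cons_of_ne_nil hw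
  cases t with
  | nil => simp [dsl, zds, npArgs]
  | cons y t' =>
    rw [dsl, zds, zds_dsl_tail (y :: t') x (by simp), npArgs]
    simp only [List.sum_cons, sub_zero, List.dropLast_cons₂, List.map_cons,
      List.cons.injEq]

/-- the key identity : swapUargs (rev (swapVargs (rev w))) = npArgs w -/
lemma swap_rev_identity (w : List K) (hw : w ≠ []) :
    swapUargs ((swapVargs w.reverse).reverse) = npArgs w := by
  rw [swapVargs_reverse_eq_dsl, swapUargs_reverse, zds_dsl w hw]

/-- the conjugated np map on the v-side -/
def mArgs : List K → List K
  | [] => []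
  | x :: t => (t.map (fun a => x - a)) ++ [x]

lemma zds_map_sub (x c : K) (l : List K) :
    zds (x - c) (l.map (fun a => x - a)) = (zds c l).map (fun a => -a) := by
  induction l generalizing c with
  | nil => rfl
  | cons a t ih =>
    simp only [List.map_cons, zds, List.cons.injEq]
    exact ⟨by ring, ih a⟩

lemma zds_concat (c : K) (l : List K) (x : K) :
    zds c (l ++ [x]) = zds c l ++ [x - l.getLastD c] := by
  induction l generalizing c with
  | nil => simp [zds]
  | cons a t ih =>
    have hg : (a :: t).getLastD c = t.getLastD a := List.getLastD_cons
    simp only [List.cons_append, zds, List.append_eq, ih a, hg]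

lemma zds_sum (c : K) (l : List K) : (zds c l).sum = l.getLastD c - c := by
  induction l generalizing c with
  | nil => simp [zds]
  | cons a t ih =>
    have hg : (a :: t).getLastD c = t.getLastD a := List.getLastD_cons
    simp only [zds, List.sum_cons, ih a, hg]
    ring

lemma length_swapUargs (w : List K) : (swapUargs w).length = w.length := by
  have : ∀ (c : K) (l : List K), (zds c l).length = l.length := by
    intro c l
    induction l generalizing c with
    | nil => rfl
    | cons a t ih => simp [zds, ih a]
  rw [swapUargs_eq, this, List.length_reverse]

lemma length_swapVargs (w : List K) : (swapVargs w).length = w.length := by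
  simp [swapVargs]

/-- key conjugation identity: swapUargs ∘ mArgs = npArgs ∘ swapUargs -/
lemma swapUargs_mArgs (v : List K) (hv : v ≠ []) :
    swapUargs (mArgs v) = npArgs (swapUargs v) := by
  obtain ⟨x, t, rfl⟩ := List.exists_cons_of_ne_nil hv
  have hrev : (mArgs (x :: t)).reverse = x :: (t.reverse.map (fun a => x - a)) := by
    simp [mArgs, List.map_reverse]
  have hlhs : swapUargs (mArgs (x :: t)) = (x - 0) :: (zds 0 t.reverse).map (fun a => -a) := by
    rw [swapUargs_eq, hrev, zds]
    congr 1
    have h1 : zds x (t.reverse.map (fun a => x - a)) =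
        zds (x - 0) (t.reverse.map (fun a => x - a)) := by rw [sub_zero]
    rw [h1, zds_map_sub]
  have hrhs : swapUargs (x :: t) = zds 0 t.reverse ++ [x - t.reverse.getLastD 0] := by
    rw [swapUargs_eq]
    simp only [List.reverse_cons]
    rw [zds_concat]
  rw [hlhs, hrhs, npArgs]
  congr 1
  · rw [List.sum_append, zds_sum]
    simp only [List.sum_cons, List.sum_nil]
    ring
  · rw [List.dropLast_concat]

/-- insert x at position n -/
def insAt {α : Type*} (n : ℕ) (x : α) (l : List α) : List α :=
  l.take n ++ x :: l.drop n

lemma insAt_zero {α : Type*} (x : α) (l : List α) : insAt 0 x l = x :: l := rfl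

lemma insAt_succ_cons {α : Type*} (n : ℕ) (x y : α) (l : List α) :
    insAt (n+1) x (y :: l) = y :: insAt n x l := by
  simp [insAt]

lemma insAt_length {α : Type*} (x : α) (l : List α) : insAt l.length x l = l ++ [x] := by
  simp [insAt]

lemma insAt_ne_nil {α : Type*} (n : ℕ) (x : α) (l : List α) : insAt n x l ≠ [] := by
  simp [insAt]

lemma map_insAt {α β : Type*} (f : α → β) (n : ℕ) (x : α) (l : List α) :
    (insAt n x l).map f = insAt n (f x) (l.map f) := by
  simp [insAt, List.map_take, List.map_drop]

lemma insAt_append_single {α : Type*} (n : ℕ) (x b : α) (l : List α) (h : n ≤ l.length) :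
    insAt n x (l ++ [b]) = insAt n x l ++ [b] := by
  simp only [insAt, List.take_append_of_le_length h, List.drop_append_of_le_length h]
  simp

lemma shuffles_single {α : Type*} (x : α) (l : List α) :
    shuffles [x] l = (List.range (l.length + 1)).map (fun i => insAt i x l) := by
  induction l with
  | nil => simp [shuffles_nil_right', insAt]
  | cons y t ih =>
    rw [shuffles_cons_cons', shuffles_nil_left', ih]
    rw [List.length_cons, List.range_succ_eq_map (n := t.length + 1), List.map_cons,
      List.map_map]
    simp only [List.map_cons, List.map_nil, List.singleton_append, insAt_zero,
      List.nil_append, List.cons_append]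
    rw [List.map_map]
    congr 1

lemma psl_map_neg (w : List K) : psl (w.map (fun a => -a)) = (psl w).map (fun a => -a) := by
  induction w with
  | nil => rfl
  | cons x t ih =>
    simp only [List.map_cons, psl, ih, List.map_map, List.cons.injEq]
    refine ⟨trivial, ?_⟩
    apply List.map_congr_left
    intro a _
    simp only [Function.comp_apply]
    ring

lemma swapVargs_map_neg (w : List K) :
    swapVargs (w.map (fun a => -a)) = (swapVargs w).map (fun a => -a) := by
  rw [swapVargs_eq_psl_reverse, swapVargs_eq_psl_reverse, psl_map_neg, List.map_reverse]

end Aux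


section MainLemmas

variable (A C : List K → K)

set_option linter.unusedSectionVars false

/-- neg ∘ push invariance -/
lemma aux_np (hal : Alternal A) (hC : IsConstantMould C)
    (hswapal : Alternal (fun w => swapUV A w + C w)) :
    ∀ w : List K, w ≠ [] → A (npArgs w) = A w := by
  have haux : ∀ w : List K, w ≠ [] →
      A (npArgs w) = A w + ((-1 : K) ^ (w.length + 1) - 1) * C (swapVargs w.reverse) := by
    intro w hw
    set v := swapVargs w.reverse with hv
    have hvlen : v.length = w.length := by rw [hv, length_swapVargs, List.length_reverse]
    have hvne : v ≠ [] := by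
      apply List.ne_nil_of_length_pos
      rw [hvlen]
      exact List.length_pos_iff.mpr hw
    have hBrev := alternal_reverse (fun w => swapUV A w + C w) hswapal v hvne
    simp only [swapUV] at hBrev
    have h1 : swapUargs v.reverse = npArgs w := by
      rw [hv]; exact swap_rev_identity w hw
    have h2 : swapUargs v = w.reverse := by
      rw [hv]; exact swapUargs_swapVargs w.reverse
    have h3 : C v.reverse = C v := hC _ _ (by rw [List.length_reverse])
    have hArev := alternal_reverse A hal w hw
    have hsq : ((-1 : K) ^ (w.length + 1)) * ((-1 : K) ^ (w.length + 1)) = 1 := by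
      rw [← pow_add]
      exact Even.neg_one_pow ⟨w.length + 1, by ring⟩
    rw [h1, h2, h3, hvlen, hArev] at hBrev
    linear_combination hBrev + A w * hsq
  intro w hw
  obtain ⟨m, hm⟩ : ∃ m, w.length = m + 1 := by
    cases h : w.length with
    | zero => exact absurd (List.length_eq_zero_iff.mp h) hw
    | succ n => exact ⟨n, rfl⟩
  set w0 : List K := List.replicate (m+1) (0 : K) with hw0
  have hw0len : w0.length = m + 1 := by rw [hw0, List.length_replicate]
  have hw0ne : w0 ≠ [] := by
    apply List.ne_nil_of_length_pos; omega
  have hnp0 : npArgs w0 = w0 := by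
    rw [hw0, npArgs]
    have h1 : (List.replicate (m+1) (0 : K)).sum = 0 := by simp
    have h2 : (List.replicate (m+1) (0 : K)).dropLast = List.replicate m 0 := by
      rw [List.replicate_succ']
      exact List.dropLast_concat
    rw [h1, h2, List.map_replicate, neg_zero, ← List.replicate_succ]
  have hz := haux w0 hw0ne
  rw [hnp0, hw0len] at hz
  have hcoef : ((-1 : K) ^ (m + 1 + 1) - 1) * C (swapVargs w0.reverse) = 0 := by
    linear_combination -hz
  have hClen : C (swapVargs w.reverse) = C (swapVargs w0.reverse) :=
    hC _ _ (by rw [length_swapVargs, length_swapVargs, List.length_reverse,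
      List.length_reverse, hw0len, hm])
  have hfin := haux w hw
  rw [hClen, hm] at hfin
  rw [hfin]
  linear_combination hcoef

/-- invariance of the swap mould under the conjugated map mArgs -/
lemma aux_mInv (hal : Alternal A) (hC : IsConstantMould C)
    (hswapal : Alternal (fun w => swapUV A w + C w)) :
    ∀ v : List K, v ≠ [] →
      A (swapUargs (mArgs v)) + C (mArgs v) = A (swapUargs v) + C v := by
  intro v hv
  have hUne : swapUargs v ≠ [] := by
    apply List.ne_nil_of_length_pos
    rw [length_swapUargs]
    exact List.length_pos_iff.mpr hv
  have hClen : C (mArgs v) = C v := by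
    apply hC
    obtain ⟨x, t, rfl⟩ := List.exists_cons_of_ne_nil hv
    simp [mArgs]
  rw [swapUargs_mArgs v hv, aux_np A C hal hC hswapal _ hUne, hClen]

lemma mArgs_ne_nil (v : List K) (hv : v ≠ []) : mArgs v ≠ [] := by
  obtain ⟨x, t, rfl⟩ := List.exists_cons_of_ne_nil hv
  simp [mArgs]

/-- neg invariance of the swap mould in depth ≥ 2 -/
lemma aux_Bneg (hal : Alternal A) (hC : IsConstantMould C)
    (hswapal : Alternal (fun w => swapUV A w + C w)) :
    ∀ v : List K, 2 ≤ v.length →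
      A (swapUargs (v.map (fun a => -a))) + C (v.map (fun a => -a))
        = A (swapUargs v) + C v := by
  have hmInv := aux_mInv A C hal hC hswapal
  intro v hlen
  set B : List K → K := fun w => A (swapUargs w) + C w with hB
  have hBal : Alternal B := hswapal
  have hmB : ∀ u : List K, u ≠ [] → B (mArgs u) = B u := by
    intro u hu
    simp only [hB]
    exact hmInv u hu
  show B (v.map (fun a => -a)) = B v
  obtain ⟨v1, t1, rfl⟩ : ∃ x t, v = x :: t := by
    cases v with
    | nil => simp at hlen
    | cons x t => exact ⟨x, t, rfl⟩
  obtain ⟨v2, t, rfl⟩ : ∃ y t', t1 = y :: t' := by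
    cases t1 with
    | nil => simp at hlen
    | cons y t' => exact ⟨y, t', rfl⟩
  clear hlen
  set n := t.length with hn
  -- the first insertion relation
  have hv1 : ((shuffles [v1] (v2 :: t)).map B).sum = 0 :=
    hBal [v1] (v2 :: t) (by simp) (by simp)
  rw [shuffles_single, List.map_map, List.length_cons, ← hn,
    List.range_succ_eq_map, List.map_cons, List.sum_cons, List.map_map] at hv1
  -- the second insertion relation
  set w1 : K := v2 - v1 with hw1
  set w' : List K := (t.map (fun a => v2 - a)) ++ [v2] with hw'
  have hw'len : w'.length = n + 1 := by rw [hw']; simp [hn]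
  have hrelw : ((shuffles [w1] w').map B).sum = 0 :=
    hBal [w1] w' (by simp) (by rw [hw']; simp)
  rw [shuffles_single, List.map_map, hw'len, List.range_succ, List.map_append,
    List.sum_append] at hrelw
  -- pair up the terms
  have hclaimA : ∀ i ∈ List.range (n+1),
      (B ∘ fun i => insAt i w1 w') i = ((B ∘ fun i => insAt i v1 (v2 :: t)) ∘ Nat.succ) i := by
    intro i hi
    rw [List.mem_range] at hi
    simp only [Function.comp_apply, Nat.succ_eq_add_one]
    have hins : insAt i w1 w' = mArgs (insAt (i+1) v1 (v2 :: t)) := by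
      rw [insAt_succ_cons]
      have hm1 : mArgs (v2 :: insAt i v1 t) = ((insAt i v1 t).map (fun a => v2 - a)) ++ [v2] := rfl
      rw [hm1, map_insAt, hw', hw1, ← insAt_append_single]
      rw [List.length_map]
      omega
    rw [hins, hmB _ (insAt_ne_nil _ _ _)]
  rw [List.map_congr_left hclaimA] at hrelw
  -- the leftover term
  have hclaimB : insAt (n+1) w1 w' = mArgs (mArgs ((v1 :: v2 :: t).map (fun a => -a))) := by
    have hstep1 : mArgs ((v1 :: v2 :: t).map (fun a => -a))
        = (v2 - v1) :: ((t.map (fun a => a - v1)) ++ [-v1]) := by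
      show ((((v2 :: t).map (fun a => -a)).map (fun a => -v1 - a)) ++ [-v1]) = _
      rw [List.map_map]
      have hf : ((fun a => -v1 - a) ∘ (fun a : K => -a)) = (fun a : K => a - v1) := by
        funext a; simp only [Function.comp_apply]; ring
      rw [hf]
      simp only [List.map_cons, List.cons_append]
    rw [hstep1]
    have hstep2 : mArgs ((v2 - v1) :: ((t.map (fun a => a - v1)) ++ [-v1]))
        = (((t.map (fun a => a - v1)) ++ [-v1]).map (fun a => (v2 - v1) - a)) ++ [v2 - v1] := rfl
    rw [hstep2, List.map_append, List.map_map]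
    have hf2 : ((fun a => (v2 - v1) - a) ∘ (fun a : K => a - v1)) = (fun a : K => v2 - a) := by
      funext a; simp only [Function.comp_apply]; ring
    have hval : (v2 - v1) - (-v1) = v2 := by ring
    rw [hf2]
    simp only [List.map_cons, List.map_nil, hval]
    have hlast : insAt (n+1) w1 w' = w' ++ [w1] := by
      rw [← hw'len, insAt_length]
    rw [hlast, hw', hw1]
  have hne2 : (v1 :: v2 :: t).map (fun a : K => -a) ≠ [] := by simp
  simp only [List.map_cons, List.map_nil, List.sum_cons, List.sum_nil, add_zero,
    Function.comp_apply] at hrelw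
  rw [hclaimB, hmB _ (mArgs_ne_nil _ hne2), hmB _ hne2] at hrelw
  have h0 : insAt 0 v1 (v2 :: t) = v1 :: v2 :: t := rfl
  simp only [Function.comp_apply, h0] at hv1
  linear_combination hrelw - hv1

/-- neg invariance of A -/
lemma aux_Aneg (hal : Alternal A) (hC : IsConstantMould C)
    (hswapal : Alternal (fun w => swapUV A w + C w))
    (heven : ∀ x : K, A [-x] = A [x]) :
    ∀ w : List K, A (w.map (fun a => -a)) = A w := by
  intro w
  match w with
  | [] => simp
  | [x] =>
    show A [-x] = A [x]
    exact heven x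
  | x :: y :: t =>
    have hlen : 2 ≤ (swapVargs (x :: y :: t)).length := by
      rw [length_swapVargs]; simp
    have h1 := aux_Bneg A C hal hC hswapal (swapVargs (x :: y :: t)) hlen
    rw [← swapVargs_map_neg] at h1
    have hClen : C (swapVargs ((x :: y :: t).map (fun a => -a)))
        = C (swapVargs (x :: y :: t)) :=
      hC _ _ (by rw [length_swapVargs, length_swapVargs, List.length_map])
    rw [swapUargs_swapVargs, swapUargs_swapVargs, hClen] at h1
    linear_combination h1

end MainLemmas

/-- a mould in ARI_{al*al} (alternal, swap alternal up to a constant-valued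
mould, even in depth 1) is invariant under both `neg` and `push`. -/
theorem alstaral_neg_and_push_invariant (A C : List K → K)
    (hA0 : A [] = 0) (hal : Alternal A)
    (hC : IsConstantMould C)
    (hswapal : Alternal (fun w => swapUV A w + C w))
    (heven : ∀ x : K, A [-x] = A [x]) :
    negM A = A ∧ pushM A = A := by
  have hAneg := aux_Aneg A C hal hC hswapal heven
  have hnp := aux_np A C hal hC hswapal
  have hneg : negM A = A := by
    funext w
    exact hAneg w
  refine ⟨hneg, ?_⟩
  funext w
  match w with
  | [] => rfl
  | x :: t =>
    show A (-(x :: t).sum :: (x :: t).dropLast) = A (x :: t)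
    have hmapneg : (npArgs (x :: t)).map (fun a => -a)
        = -(x :: t).sum :: (x :: t).dropLast := by
      rw [npArgs]
      simp only [List.map_cons, List.map_map]
      congr 1
      have hf : ((fun a : K => -a) ∘ (fun a : K => -a)) = id := by
        funext a; simp
      rw [hf, List.map_id]
    rw [← hmapneg, hAneg, hnp _ (by simp)]
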